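/- For every r ≥ 0 one has b(r)·c(r) ≤ −m², with equality if and only if r = 0. In particular the product b·c is strictly decreasing on (0,∞). -/

import Mathlib

/-- For the coefficient functions of the Atiyah–Hitchin metric, `b(r)·c(r) ≤ −m²` for all
`r ≥ 0`, with equality if and only if `r = 0`; in particular `b·c` is strictly decreasing
on `(0,∞)`. -/
theorem atiyah_hitchin_bc_le_neg_m_sq
    (m : ℝ) (hm : 0 < m)
    (a b c : ℝ → ℝ)
    (hca : ContinuousOn a (Set.Ici 0))
    (hcb : ContinuousOn b (Set.Ici 0))
    (hcc : ContinuousOn c (Set.Ici 0))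
    (hda : ∀ r > (0:ℝ),
      HasDerivAt a ((a r ^ 2 - (b r - c r) ^ 2) / (2 * b r * c r)) r)
    (hdb : ∀ r > (0:ℝ),
      HasDerivAt b ((b r ^ 2 - (c r - a r) ^ 2) / (2 * c r * a r)) r)
    (hdc : ∀ r > (0:ℝ),
      HasDerivAt c ((c r ^ 2 - (a r - b r) ^ 2) / (2 * a r * b r)) r)
    (hia : a 0 = 0) (hib : b 0 = -m) (hic : c 0 = m)
    (hapos : ∀ r > (0:ℝ), 0 < a r)
    (hcpos : ∀ r > (0:ℝ), 0 < c r)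
    (hbneg : ∀ r > (0:ℝ), b r < 0)
    (habc : ∀ r > (0:ℝ), b r + c r < a r) :
    (∀ r ≥ (0:ℝ), b r * c r ≤ -m ^ 2 ∧ (b r * c r = -m ^ 2 ↔ r = 0)) ∧
      StrictAntiOn (fun r => b r * c r) (Set.Ioi 0) := by
  have hderiv : ∀ r > (0:ℝ),
      HasDerivAt (fun r => b r * c r) (b r + c r - a r) r := by
    intro r hr
    have ha := hapos r hr
    have hb := hbneg r hr
    have hc := hcpos r hr
    have h : HasDerivAt (fun y => b y * c y) _ r := (hdb r hr).mul (hdc r hr)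
    convert h using 1
    field_simp [ha.ne', hb.ne, hc.ne']
    ring
  have hfc : ContinuousOn (fun r => b r * c r) (Set.Ici 0) := hcb.mul hcc
  have hanti : StrictAntiOn (fun r => b r * c r) (Set.Ici 0) := by
    apply strictAntiOn_of_deriv_neg (convex_Ici 0) hfc
    intro x hx
    rw [interior_Ici] at hx
    rw [(hderiv x hx).deriv]
    linarith [habc x hx]
  have hf0 : b 0 * c 0 = -m ^ 2 := by rw [hib, hic]; ring
  constructor
  · intro r hr
    rcases eq_or_lt_of_le hr with h | h
    · rw [← h]
      exact ⟨le_of_eq hf0, by simp [hf0]⟩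
    · have hlt : b r * c r < -m ^ 2 := by
        have := hanti (Set.self_mem_Ici) (Set.mem_Ici.mpr hr) h
        simpa [hf0] using this
      exact ⟨le_of_lt hlt, by constructor <;> intro h' <;> [linarith; exact absurd h' (ne_of_gt h)]⟩
  · exact hanti.mono (fun x hx => Set.mem_Ici.mpr (le_of_lt hx))
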